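/- Let G = (V, E) be a finite connected graph with symmetric edge set E. Let g : V → ℝ satisfy Σ_{x∈V} g(x) = 0. Then there exists an antisymmetric function J : E → ℝ with div J(x) := Σ_{y∼x} J(x,y) = g(x) for all x ∈ V, and max_{(x,y)∈E} |J(x,y)| ≤ (1/2)·Σ_{x∈V} |g(x)|. -/

import Mathlib

open Classical Finset

noncomputable def edip {V : Type*} (u v x y : V) : ℝ :=
  if x = u ∧ y = v then 1 else if x = v ∧ y = u then -1 else 0

lemma edip_anti {V : Type*} (u v x y : V) (huv : u ≠ v) :
    edip u v x y = - edip u v y x := by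
  unfold edip
  split_ifs with h1 h2 h3 h4 h5 h6 <;> simp_all <;> tauto

lemma edip_ne {V : Type*} {u v x y : V} (hx : x ≠ u) (hx' : x ≠ v) :
    edip u v x y = 0 := by
  unfold edip; split_ifs with h1 h2 <;> simp_all

lemma edip_ne' {V : Type*} {u v x y : V} (hx : x ≠ u) (hy : y ≠ u) :
    edip u v x y = 0 := by
  unfold edip; split_ifs with h1 h2 <;> simp_all

lemma edip_abs {V : Type*} (u v x y : V) : |edip u v x y| ≤ 1 := by
  unfold edip; split_ifs <;> norm_num

lemma edip_div {V : Type*} [Fintype V] (u v x : V) (huv : u ≠ v) :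
    ∑ y, edip u v x y = (if x = u then 1 else 0) - (if x = v then 1 else 0) := by
  have : ∀ y, edip u v x y =
      (if y = v then (if x = u then (1:ℝ) else 0) else 0) +
      (if y = u then (if x = v then (-1:ℝ) else 0) else 0) := by
    intro y; unfold edip
    split_ifs <;> simp_all <;> tauto
  rw [Finset.sum_congr rfl fun y _ => this y, Finset.sum_add_distrib]
  simp only [Finset.sum_ite_eq', Finset.mem_univ, if_true]
  split_ifs <;> norm_num

noncomputable def wflow {V : Type*} {G : SimpleGraph V} :
    ∀ {a b : V}, G.Walk a b → V → V → ℝ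
  | _, _, SimpleGraph.Walk.nil => fun _ _ => 0
  | _, _, SimpleGraph.Walk.cons (u := u) (v := v) _ p =>
      fun x y => edip u v x y + wflow p x y

lemma wflow_anti {V : Type*} {G : SimpleGraph V} {a b : V} (p : G.Walk a b) :
    ∀ x y, wflow p x y = - wflow p y x := by
  induction p with
  | nil => intro x y; simp [wflow]
  | cons h p ih =>
      intro x y
      simp only [wflow]
      rw [edip_anti _ _ _ _ (G.ne_of_adj h), ih]
      ring

lemma wflow_supp {V : Type*} {G : SimpleGraph V} {a b : V} (p : G.Walk a b) :
    ∀ x y, ¬ G.Adj x y → wflow p x y = 0 := by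
  induction p with
  | nil => intro x y _; simp [wflow]
  | cons h p ih =>
      intro x y hxy
      simp only [wflow, ih x y hxy]
      rw [add_zero]
      unfold edip
      split_ifs with h1 h2
      · exact absurd (h1.1 ▸ h1.2 ▸ h) hxy
      · exact absurd (h2.1 ▸ h2.2 ▸ (G.adj_symm h)) hxy
      · rfl

lemma wflow_vsupp {V : Type*} {G : SimpleGraph V} {a b : V} (p : G.Walk a b) :
    ∀ x y, x ∉ p.support → wflow p x y = 0 := by
  induction p with
  | nil => intro x y _; simp [wflow]
  | cons h p ih =>
      intro x y hx
      simp only [SimpleGraph.Walk.support_cons, List.mem_cons, not_or] at hx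
      simp only [wflow, ih x y hx.2, add_zero]
      exact edip_ne hx.1 (fun hv => hx.2 (hv ▸ p.start_mem_support))

lemma wflow_div {V : Type*} [Fintype V] {G : SimpleGraph V} {a b : V} (p : G.Walk a b) :
    ∀ x, ∑ y, wflow p x y = (if x = a then 1 else 0) - (if x = b then 1 else 0) := by
  induction p with
  | nil => intro x; simp [wflow]
  | cons h p ih =>
      intro x
      simp only [wflow, Finset.sum_add_distrib, ih, edip_div _ _ _ (G.ne_of_adj h)]
      ring

lemma wflow_bd {V : Type*} {G : SimpleGraph V} {a b : V} (p : G.Walk a b)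
    (hp : p.IsPath) : ∀ x y, |wflow p x y| ≤ 1 := by
  induction p with
  | nil => intro x y; simp [wflow]
  | @cons u v w h p ih =>
      intro x y
      have hu : u ∉ p.support := (SimpleGraph.Walk.cons_isPath_iff _ _ |>.mp hp).2
      have hp' : p.IsPath := (SimpleGraph.Walk.cons_isPath_iff _ _ |>.mp hp).1
      simp only [wflow]
      by_cases hx : x = u
      · rw [wflow_vsupp p x y (hx ▸ hu), add_zero]
        exact edip_abs u v x y
      · by_cases hy : y = u
        · rw [wflow_anti p x y, wflow_vsupp p y x (hy ▸ hu), neg_zero, add_zero]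
          exact edip_abs u v x y
        · rw [edip_ne' hx hy, zero_add]
          exact ih hp' x y

lemma dipole {V : Type*} [Fintype V] {G : SimpleGraph V} (hconn : G.Connected) (a b : V) :
    ∃ J : V → V → ℝ,
      (∀ x y, J x y = - J y x) ∧ (∀ x y, ¬ G.Adj x y → J x y = 0) ∧
      (∀ x, ∑ y, J x y = (if x = a then 1 else 0) - (if x = b then 1 else 0)) ∧
      (∀ x y, |J x y| ≤ 1) := by
  obtain ⟨w⟩ := hconn.preconnected a b
  exact ⟨wflow w.toPath.1, wflow_anti _, wflow_supp _, wflow_div _,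
    wflow_bd _ w.toPath.2⟩

/-- on a finite connected graph, any `g : V → ℝ` of zero total mass is the
divergence of an antisymmetric vector field `J` supported on edges, with
`|J(x,y)| ≤ (1/2)·Σ_x |g(x)|`. -/
theorem stmt8 {V : Type*} [Fintype V] (G : SimpleGraph V) (hconn : G.Connected)
    (g : V → ℝ) (hg : ∑ x, g x = 0) :
    ∃ J : V → V → ℝ,
      (∀ x y, J x y = - J y x) ∧
      (∀ x y, ¬ G.Adj x y → J x y = 0) ∧
      (∀ x, ∑ y, J x y = g x) ∧
      (∀ x y, |J x y| ≤ (1 / 2) * ∑ x, |g x|) := by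
  classical
  choose Jd hanti hsupp hdiv hbd using fun a b => dipole hconn a b
  set N : ℝ := (1/2) * ∑ x, |g x| with hN
  set gp : V → ℝ := fun x => max (g x) 0 with hgp
  set gm : V → ℝ := fun x => max (-g x) 0 with hgm
  have hgpm : ∀ x, gp x - gm x = g x := by
    intro x; simp only [hgp, hgm]; rcases le_total (g x) 0 with h | h <;>
      simp [max_eq_left, max_eq_right, h] <;> linarith
  have habs : ∀ x, gp x + gm x = |g x| := by
    intro x; simp only [hgp, hgm]; rcases le_total (g x) 0 with h | h <;>
      [rw [abs_of_nonpos h]; rw [abs_of_nonneg h]] <;>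
      simp [max_eq_left, max_eq_right, h, neg_nonneg] <;> linarith
  have hgp0 : ∀ x, 0 ≤ gp x := fun x => le_max_right _ _
  have hgm0 : ∀ x, 0 ≤ gm x := fun x => le_max_right _ _
  have h1 : ∑ x, (gp x + gm x) = 2 * N := by
    rw [Finset.sum_congr rfl fun x _ => habs x, hN]; ring
  have h2 : ∑ x, (gp x - gm x) = 0 := by
    rw [Finset.sum_congr rfl fun x _ => hgpm x, hg]
  rw [Finset.sum_add_distrib] at h1
  rw [Finset.sum_sub_distrib] at h2
  have hSp : ∑ x, gp x = N := by linarith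
  have hSm : ∑ x, gm x = N := by linarith
  have hNnn : 0 ≤ N := by rw [hN]; positivity
  by_cases hN0 : N = 0
  · refine ⟨fun _ _ => 0, by simp, by simp, ?_, fun x y => by simpa using hNnn⟩
    intro x
    have hz : ∑ x, |g x| = 0 := by
      have := hN0; rw [hN] at this; linarith
    have hx : g x = 0 := abs_eq_zero.mp <|
      (Finset.sum_eq_zero_iff_of_nonneg
        (fun i _ => abs_nonneg (g i))).mp hz x (Finset.mem_univ x)
    simp [hx]
  · have hNpos : 0 < N := lt_of_le_of_ne hNnn (Ne.symm hN0)
    refine ⟨fun x y => N⁻¹ * ∑ a, ∑ b, gp a * gm b * Jd a b x y, ?_, ?_, ?_, ?_⟩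
    · intro x y
      change N⁻¹ * (∑ a, ∑ b, gp a * gm b * Jd a b x y)
          = -(N⁻¹ * ∑ a, ∑ b, gp a * gm b * Jd a b y x)
      have h3 : (∑ a, ∑ b, gp a * gm b * Jd a b x y)
          = ∑ a, ∑ b, -(gp a * gm b * Jd a b y x) := by
        refine Finset.sum_congr rfl fun a _ => Finset.sum_congr rfl fun b _ => ?_
        rw [hanti a b x y]; ring
      rw [h3]
      simp only [Finset.sum_neg_distrib]
      ring
    · intro x y hxy
      change N⁻¹ * (∑ a, ∑ b, gp a * gm b * Jd a b x y) = 0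
      have : ∀ a b, gp a * gm b * Jd a b x y = 0 := fun a b => by
        rw [hsupp a b x y hxy, mul_zero]
      simp [this]
    · intro x
      change ∑ y, N⁻¹ * (∑ a, ∑ b, gp a * gm b * Jd a b x y) = g x
      rw [← Finset.mul_sum]
      have step : ∑ y, ∑ a, ∑ b, gp a * gm b * Jd a b x y
          = ∑ a, ∑ b, gp a * gm b * ((if x = a then 1 else 0) - (if x = b then 1 else 0)) := by
        rw [Finset.sum_comm]
        refine Finset.sum_congr rfl fun a _ => ?_
        rw [Finset.sum_comm]
        refine Finset.sum_congr rfl fun b _ => ?_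
        rw [← Finset.mul_sum, hdiv a b x]
      rw [step]
      have expand : ∑ a, ∑ b, gp a * gm b * ((if x = a then (1:ℝ) else 0) - (if x = b then 1 else 0))
          = gp x * N - N * gm x := by
        simp only [mul_sub]
        rw [Finset.sum_congr rfl fun a (_ : a ∈ Finset.univ) => Finset.sum_sub_distrib _ _,
          Finset.sum_sub_distrib]
        congr 1
        · have ha : ∀ a, ∑ b, gp a * gm b * (if x = a then (1:ℝ) else 0)
              = (if x = a then gp a * N else 0) := by
            intro a
            rw [← Finset.sum_mul, ← Finset.mul_sum, hSm]
            split_ifs <;> ring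
          rw [Finset.sum_congr rfl fun a _ => ha a, Finset.sum_ite_eq]
          simp
        · have hb : ∀ a, ∑ b, gp a * gm b * (if x = b then (1:ℝ) else 0)
              = gp a * gm x := by
            intro a
            have h4 : ∀ b, gp a * gm b * (if x = b then (1:ℝ) else 0)
                = if x = b then gp a * gm b else 0 := fun b => by split_ifs <;> ring
            rw [Finset.sum_congr rfl fun b _ => h4 b, Finset.sum_ite_eq]
            simp
          rw [Finset.sum_congr rfl fun a _ => hb a, ← Finset.sum_mul, hSp]
      rw [expand, show N⁻¹ * (gp x * N - N * gm x) = gp x - gm x by field_simp,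
        hgpm]
    · intro x y
      change |N⁻¹ * (∑ a, ∑ b, gp a * gm b * Jd a b x y)| ≤ N
      rw [abs_mul, abs_of_nonneg (inv_nonneg.mpr hNnn)]
      have hb1 : |∑ a, ∑ b, gp a * gm b * Jd a b x y| ≤ N * N := by
        calc |∑ a, ∑ b, gp a * gm b * Jd a b x y|
            ≤ ∑ a, |∑ b, gp a * gm b * Jd a b x y| := Finset.abs_sum_le_sum_abs _ _
          _ ≤ ∑ a, ∑ b, |gp a * gm b * Jd a b x y| :=
              Finset.sum_le_sum fun a _ => Finset.abs_sum_le_sum_abs _ _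
          _ ≤ ∑ a, ∑ b, gp a * gm b := by
              refine Finset.sum_le_sum fun a _ => Finset.sum_le_sum fun b _ => ?_
              rw [abs_mul, abs_of_nonneg (mul_nonneg (hgp0 a) (hgm0 b))]
              calc gp a * gm b * |Jd a b x y| ≤ gp a * gm b * 1 :=
                    mul_le_mul_of_nonneg_left (hbd a b x y)
                      (mul_nonneg (hgp0 a) (hgm0 b))
                _ = gp a * gm b := mul_one _
          _ = N * N := by rw [← Finset.sum_mul_sum, hSp, hSm]
      calc N⁻¹ * |∑ a, ∑ b, gp a * gm b * Jd a b x y| ≤ N⁻¹ * (N * N) :=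
            mul_le_mul_of_nonneg_left hb1 (inv_nonneg.mpr hNnn)
        _ = N := by field_simp
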